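/- Phase-one invariant of interval Gaussian elimination: let K ≥ 1 and define six sequences indexed by t ∈ {0, …, K−1}: exact matrices c^t : Matrix (Fin K) (Fin K) ℝ and vectors q^t : Fin K → ℝ, together with interval bounds c̲^t, c̄^t, q̲^t, q̄^t, where at step t the pivot is k = t and the exact update is c^{t+1}_{ij} = c^t_{ij} − c^t_{ik} c^t_{kj} / c^t_{kk} for i > k (otherwise unchanged) and q^{t+1}_i = q^t_i − c^t_{ik} q^t_k / c^t_{kk} for i > k (otherwise unchanged); the interval updates are c̲^{t+1}_{ij} = 0 if i > k and j ≤ k, c̲^{t+1}_{ij} = c̲^t_{ij} − c̄^t_{ik} c̄^t_{kj} / c̲^t_{kk} if i > k and j > k, else c̲^t_{ij}; c̄^{t+1}_{ij} = 0 if i > k and j ≤ k, c̄^{t+1}_{ij} = c̄^t_{ij} − c̲^t_{ik} c̲^t_{kj} / c̄^t_{kk} if i > k and j > k, else c̄^t_{ij}; q̲^{t+1}_i = q̲^t_i − c̄^t_{ik} q̄^t_k / c̲^t_{kk} if i > k else q̲^t_i; and q̄^{t+1}_i = q̄^t_i − c̲^t_{ik} q̲^t_k / c̄^t_{kk} if i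 > k else q̄^t_i. Suppose the initial bounds c̲^0 ≤ c^0 ≤ c̄^0 and q̲^0 ≤ q^0 ≤ q̄^0 hold elementwise, and for every t and all i, j: c̲^t_{ij} ≥ 0, c̲^t_{ii} > 0, and q̲^t_i ≥ 0. Then for every t ∈ {0, …, K−1}, elementwise c̲^t ≤ c^t ≤ c̄^t and q̲^t ≤ q^t ≤ q̄^t. -/

import Mathlib

private lemma interval_div_aux {xl x xu yl y yu dl d du : ℝ}
    (hxl : 0 ≤ xl) (hx1 : xl ≤ x) (hx2 : x ≤ xu)
    (hyl : 0 ≤ yl) (hy1 : yl ≤ y) (hy2 : y ≤ yu)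
    (hdl : 0 < dl) (hd1 : dl ≤ d) (hd2 : d ≤ du) :
    xl * yl / du ≤ x * y / d ∧ x * y / d ≤ xu * yu / dl := by
  have hd : 0 < d := lt_of_lt_of_le hdl hd1
  have hx : 0 ≤ x := le_trans hxl hx1
  have hy : 0 ≤ y := le_trans hyl hy1
  constructor
  · exact div_le_div₀ (mul_nonneg hx hy) (mul_le_mul hx1 hy1 hyl hx) hd hd2
  · exact div_le_div₀ (mul_nonneg (le_trans hx hx2) (le_trans hy hy2))
      (mul_le_mul hx2 hy2 hy (le_trans hx hx2)) hdl hd1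



/-- Phase-one invariant of interval Gaussian elimination: if the initial elementwise
bounds hold and all lower bounds satisfy the positivity conditions, then the elementwise
confidence intervals remain valid at every step `t ∈ {0, …, K−1}` of forward
elimination (with pivot `k = t` at step `t`). -/
theorem interval_gaussian_elim_phase_one_invariant
    (K : ℕ) (hK : 1 ≤ K)
    (c cl cu : ℕ → Matrix (Fin K) (Fin K) ℝ)
    (q ql qu : ℕ → Fin K → ℝ)
    -- exact forward-elimination updates, pivot k with (k : ℕ) = t
    (hc : ∀ (t : ℕ) (k : Fin K), (k : ℕ) = t → t + 1 < K → ∀ i j : Fin K,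
      c (t + 1) i j =
        if k < i then c t i j - c t i k * c t k j / c t k k else c t i j)
    (hq : ∀ (t : ℕ) (k : Fin K), (k : ℕ) = t → t + 1 < K → ∀ i : Fin K,
      q (t + 1) i =
        if k < i then q t i - c t i k * q t k / c t k k else q t i)
    -- interval lower-bound updates for the matrix
    (hcl : ∀ (t : ℕ) (k : Fin K), (k : ℕ) = t → t + 1 < K → ∀ i j : Fin K,
      cl (t + 1) i j =
        if k < i ∧ j ≤ k then 0
        else if k < i ∧ k < j then cl t i j - cu t i k * cu t k j / cl t k k
        else cl t i j)
    -- interval upper-bound updates for the matrix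
    (hcu : ∀ (t : ℕ) (k : Fin K), (k : ℕ) = t → t + 1 < K → ∀ i j : Fin K,
      cu (t + 1) i j =
        if k < i ∧ j ≤ k then 0
        else if k < i ∧ k < j then cu t i j - cl t i k * cl t k j / cu t k k
        else cu t i j)
    -- interval lower-bound updates for the vector
    (hql : ∀ (t : ℕ) (k : Fin K), (k : ℕ) = t → t + 1 < K → ∀ i : Fin K,
      ql (t + 1) i =
        if k < i then ql t i - cu t i k * qu t k / cl t k k else ql t i)
    -- interval upper-bound updates for the vector
    (hqu : ∀ (t : ℕ) (k : Fin K), (k : ℕ) = t → t + 1 < K → ∀ i : Fin K,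
      qu (t + 1) i =
        if k < i then qu t i - cl t i k * ql t k / cu t k k else qu t i)
    -- initial elementwise bounds
    (hinitc : ∀ i j, cl 0 i j ≤ c 0 i j ∧ c 0 i j ≤ cu 0 i j)
    (hinitq : ∀ i, ql 0 i ≤ q 0 i ∧ q 0 i ≤ qu 0 i)
    -- positivity conditions on the lower bounds at every step
    (hclnn : ∀ t < K, ∀ i j : Fin K, 0 ≤ cl t i j)
    (hclpos : ∀ t < K, ∀ i : Fin K, 0 < cl t i i)
    (hqlnn : ∀ t < K, ∀ i : Fin K, 0 ≤ ql t i) :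
    ∀ t < K,
      (∀ i j : Fin K, cl t i j ≤ c t i j ∧ c t i j ≤ cu t i j) ∧
        (∀ i : Fin K, ql t i ≤ q t i ∧ q t i ≤ qu t i) := by
  suffices H : ∀ t < K,
      ((∀ i j : Fin K, cl t i j ≤ c t i j ∧ c t i j ≤ cu t i j) ∧
        (∀ i : Fin K, ql t i ≤ q t i ∧ q t i ≤ qu t i)) ∧
      (∀ i j : Fin K, (j : ℕ) < t → t ≤ (i : ℕ) → cl t i j = 0 ∧ cu t i j = 0) by
    exact fun t ht => (H t ht).1
  intro t
  induction t with
  | zero =>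
    intro _
    exact ⟨⟨hinitc, hinitq⟩, fun i j hj _ => absurd hj (Nat.not_lt_zero _)⟩
  | succ t ih =>
    intro ht
    have htK : t < K := by omega
    obtain ⟨⟨hcB, hqB⟩, hZ⟩ := ih htK
    set k : Fin K := ⟨t, htK⟩ with hkdef
    have hkt : (k : ℕ) = t := rfl
    have hpivl : 0 < cl t k k := hclpos t htK k
    have hpivc : 0 < c t k k := lt_of_lt_of_le hpivl (hcB k k).1
    have hnn : ∀ i j, 0 ≤ c t i j := fun i j => le_trans (hclnn t htK i j) (hcB i j).1
    have hZero : ∀ i j : Fin K, (j : ℕ) < t → t ≤ (i : ℕ) → c t i j = 0 := by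
      intro i j hj hi
      obtain ⟨h1, h2⟩ := hZ i j hj hi
      have := (hcB i j).1
      have := (hcB i j).2
      linarith
    refine ⟨⟨?_, ?_⟩, ?_⟩
    · intro i j
      rw [hc t k rfl ht i j, hcl t k rfl ht i j, hcu t k rfl ht i j]
      by_cases hi : k < i
      · by_cases hj : j ≤ k
        · have hc0 : c t i j - c t i k * c t k j / c t k k = 0 := by
            rcases lt_or_eq_of_le hj with hj' | hj'
            · have hjt : (j : ℕ) < t := hj'
              have hit : t ≤ (i : ℕ) := le_of_lt hi
              rw [hZero i j hjt hit, hZero k j hjt le_rfl]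
              ring
            · subst hj'
              field_simp
              ring
          simp only [hi, hj, and_self, if_true, true_and]
          rw [hc0]
          exact ⟨le_rfl, le_rfl⟩
        · have hj' : k < j := not_le.1 hj
          simp only [hi, hj, and_false, if_false, hj', and_self, if_true, true_and]
          obtain ⟨h1, h2⟩ := interval_div_aux (hclnn t htK i k) (hcB i k).1 (hcB i k).2
            (hclnn t htK k j) (hcB k j).1 (hcB k j).2 hpivl (hcB k k).1 (hcB k k).2
          constructor
          · linarith [(hcB i j).1]
          · linarith [(hcB i j).2]
      · simp only [hi, false_and, if_false, if_neg hi]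
        exact hcB i j
    · intro i
      rw [hq t k rfl ht i, hql t k rfl ht i, hqu t k rfl ht i]
      by_cases hi : k < i
      · rw [if_pos hi, if_pos hi, if_pos hi]
        obtain ⟨h1, h2⟩ := interval_div_aux (hclnn t htK i k) (hcB i k).1 (hcB i k).2
          (hqlnn t htK k) (hqB k).1 (hqB k).2 hpivl (hcB k k).1 (hcB k k).2
        constructor
        · linarith [(hqB i).1]
        · linarith [(hqB i).2]
      · rw [if_neg hi, if_neg hi, if_neg hi]
        exact hqB i
    · intro i j hj hi
      rw [hcl t k rfl ht i j, hcu t k rfl ht i j]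
      have hik : k < i := by
        rw [Fin.lt_def]; omega
      have hjk : j ≤ k := by
        rw [Fin.le_def]; exact Nat.lt_succ_iff.mp hj
      rw [if_pos ⟨hik, hjk⟩, if_pos ⟨hik, hjk⟩]
      exact ⟨rfl, rfl⟩
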